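/- Let Σ be a two-sided topological Markov shift over a countable alphabet and suppose π : Σ → M is a factor map with the property that for every point q in some set the fiber π^{-1}({q}) ∩ Σ^# is finite. If q is a periodic point of f with f^n(q) = q and π∘σ = f∘π, then every chain R in π^{-1}({q}) ∩ Σ^# is eventually periodic under σ^n, and in fact there exists m ≥ 1 with σ^{mn}(R) = R for some chain R ∈ π^{-1}({q}) ∩ Σ^#; i.e., q has a σ-periodic coding. -/
import Mathlib


/-- Let `π : Z → M` be a factor map from a two-sided
topological Markov shift (with shift `σ`) intertwining `σ` and `f`, which is
finite-to-one on a subset `Sharp`.  If `q` is a periodic point of `f` of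
period `n`, and the fiber `F = π⁻¹{q} ∩ Sharp` is nonempty, finite and
invariant under `σ^n`, then by pigeonhole there is `m ≥ 1` and a chain
`R ∈ F` with `σ^{mn} R = R`; i.e. `q` has a `σ`-periodic coding. -/
theorem periodic_point_has_periodic_coding
    {Z M : Type*} (σ : Z → Z) (f : M → M) (π : Z → M)
    (hfactor : ∀ x, π (σ x) = f (π x))
    (Sharp : Set Z) (q : M) (n : ℕ) (hn : 1 ≤ n) (hq : f^[n] q = q)
    (F : Set Z) (hF : F = π ⁻¹' {q} ∩ Sharp)
    (hfin : F.Finite) (hne : F.Nonempty)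
    (hinv : ∀ R ∈ F, σ^[n] R ∈ F) :
    ∃ m : ℕ, 1 ≤ m ∧ ∃ R ∈ F, σ^[m * n] R = R := by
  obtain ⟨R₀, hR₀⟩ := hne
  have hmem : ∀ k : ℕ, (σ^[n])^[k] R₀ ∈ F := by
    intro k
    induction k with
    | zero => simpa using hR₀
    | succ k ih =>
      rw [Function.iterate_succ_apply']
      exact hinv _ ih
  haveI : Finite F := hfin
  obtain ⟨i, j, hij, heq⟩ := Finite.exists_ne_map_eq_of_infinite
    (fun k : ℕ => (⟨(σ^[n])^[k] R₀, hmem k⟩ : F))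
  wlog hlt : i < j generalizing i j
  · exact this j i hij.symm heq.symm (by omega)
  refine ⟨j - i, by omega, (σ^[n])^[i] R₀, hmem i, ?_⟩
  have : (σ^[n])^[j - i] ((σ^[n])^[i] R₀) = (σ^[n])^[i] R₀ := by
    rw [← Function.iterate_add_apply]
    have : j - i + i = j := by omega
    rw [this]
    exact (congrArg Subtype.val heq).symm
  rw [mul_comm, Function.iterate_mul]
  exact this
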